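/- arXiv:0805.4001 — 3 statements merged into one kernel-verified Lean document; each statement's English description precedes it below -/
import Mathlib

section
/- Let R be a discrete valuation ring, A = R[z]/(z^n), and M a finitely generated A-module. For each 0 ≤ i < n, multiplication by z induces an isomorphism between M^{(i+1)}/M^{(i)} (with M^{(j)} = {u : z^j u = 0}) and the kernel of the multiplication-by-z map z^i M → z^{i+1} M. -/
open Polynomial

/-- The local model `A = R[z]/(z^n)` of a primitive multiple curve of multiplicity `n`. -/
abbrev Az (R : Type) [CommRing R] (n : ℕ) : Type :=
  R[X] ⧸ Ideal.span ({X ^ n} : Set R[X])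

/-- The class of `z` (i.e. of `X`) in `A = R[z]/(z^n)`. -/
noncomputable def zc (R : Type) [CommRing R] (n : ℕ) : Az R n :=
  Ideal.Quotient.mk _ X

/-- The submodule `z^i M` of `M` (first canonical filtration). -/
noncomputable def zpowSub (R : Type) [CommRing R] (n : ℕ) (M : Type) [AddCommGroup M]
    [Module (Az R n) M] (i : ℕ) : Submodule (Az R n) M :=
  LinearMap.range ((zc R n ^ i) • (LinearMap.id : M →ₗ[Az R n] M))

/-- The submodule `M^{(i)} = {u ∈ M : z^i • u = 0}` (second canonical filtration). -/
noncomputable def ztor (R : Type) [CommRing R] (n : ℕ) (M : Type) [AddCommGroup M]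
    [Module (Az R n) M] (i : ℕ) : Submodule (Az R n) M :=
  LinearMap.ker ((zc R n ^ i) • (LinearMap.id : M →ₗ[Az R n] M))


/-- For `A = R[z]/(z^n)` over a DVR `R` and a finitely generated `A`-module
`M`, for each `0 ≤ i < n` multiplication by `z^i` induces an isomorphism between
`M^{(i+1)}/M^{(i)}` and the kernel of multiplication by `z` on `z^i M` (i.e. the kernel of
`z : z^i M → z^{i+1} M`). -/
theorem stmt2 (R : Type) [CommRing R] [IsDomain R] [IsDiscreteValuationRing R] (n : ℕ)
    (M : Type) [AddCommGroup M] [Module (Az R n) M] [Module.Finite (Az R n) M]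
    (i : ℕ) (hi : i < n) :
    ∃ e : (ztor R n M (i + 1) ⧸
            Submodule.comap (ztor R n M (i + 1)).subtype (ztor R n M i)) ≃ₗ[Az R n]
          ↥(zpowSub R n M i ⊓ ztor R n M 1),
      ∀ u : ztor R n M (i + 1),
        ((e (Submodule.Quotient.mk u) : ↥(zpowSub R n M i ⊓ ztor R n M 1)) : M)
          = (zc R n ^ i) • (u : M) := by
  set z := zc R n with hz
  -- the linear map `u ↦ z^i • u` from `M^{(i+1)}` to `M`
  set f1 : ztor R n M (i + 1) →ₗ[Az R n] M :=
    ((z ^ i) • (LinearMap.id : M →ₗ[Az R n] M)).comp (ztor R n M (i + 1)).subtype with hf1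
  have hmem : ∀ u : ztor R n M (i + 1), f1 u ∈ zpowSub R n M i ⊓ ztor R n M 1 := by
    intro u
    constructor
    · exact ⟨(u : M), rfl⟩
    · have hu : zc R n ^ (i + 1) • (u : M) = 0 := by
        have := u.2
        simpa only [ztor, LinearMap.mem_ker, LinearMap.smul_apply, LinearMap.id_apply] using this
      show zc R n ^ 1 • (zc R n ^ i • (u : M)) = 0
      rw [pow_one, ← mul_smul, ← pow_succ', hu]
  set f : ztor R n M (i + 1) →ₗ[Az R n] ↥(zpowSub R n M i ⊓ ztor R n M 1) :=
    LinearMap.codRestrict _ f1 hmem with hf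
  have hsurj : Function.Surjective f := by
    rintro ⟨v, hv1, hv2⟩
    obtain ⟨u, hu⟩ := hv1
    simp only [LinearMap.smul_apply, LinearMap.id_apply] at hu
    have hv2' : z • v = 0 := by
      simpa only [ztor, LinearMap.mem_ker, LinearMap.smul_apply, LinearMap.id_apply,
        pow_one, SetLike.mem_coe] using hv2
    have hu' : u ∈ ztor R n M (i + 1) := by
      simp only [ztor, LinearMap.mem_ker, LinearMap.smul_apply, LinearMap.id_apply]
      rw [pow_succ, mul_comm, mul_smul, hu, ← hz, hv2']
    refine ⟨⟨u, hu'⟩, ?_⟩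
    apply Subtype.ext
    simp only [hf, LinearMap.codRestrict_apply, hf1, LinearMap.comp_apply, LinearMap.smul_apply,
      LinearMap.id_apply, Submodule.coe_subtype]
    exact hu
  have hker : LinearMap.ker f =
      Submodule.comap (ztor R n M (i + 1)).subtype (ztor R n M i) := by
    rw [hf, LinearMap.ker_codRestrict, hf1, LinearMap.ker_comp]
    rfl
  refine ⟨(Submodule.quotEquivOfEq _ _ hker.symm).trans
    (f.quotKerEquivOfSurjective hsurj), ?_⟩
  intro u
  have h1 : ((f.quotKerEquivOfSurjective hsurj) (Submodule.Quotient.mk u)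
      : ↥(zpowSub R n M i ⊓ ztor R n M 1)) = f u := by
    simp only [LinearMap.quotKerEquivOfSurjective, LinearEquiv.trans_apply,
      LinearMap.quotKerEquivRange_apply_mk, LinearEquiv.ofTop_apply]
  rw [LinearEquiv.trans_apply, Submodule.quotEquivOfEq_mk, h1]
  rfl
end

section
/- Let R be a discrete valuation ring, A = R[z]/(z^n), and M a finitely generated A-module. For 0 ≤ i < n, the kernel of the multiplication-by-z map μ : z^i M/z^{i+1} M → z^{i+1} M/z^{i+2} M is isomorphic to the cokernel of the multiplication-by-z map λ : M^{(i+2)}/M^{(i+1)} → M^{(i+1)}/M^{(i)}. -/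
set_option maxHeartbeats 2000000


open Polynomial

section aux

variable (R : Type) [CommRing R] (n : ℕ) (M : Type) [AddCommGroup M] [Module (Az R n) M]

lemma mem_zpowSub_iff {i : ℕ} {x : M} :
    x ∈ zpowSub R n M i ↔ ∃ u : M, zc R n ^ i • u = x := by
  simp only [zpowSub, LinearMap.mem_range, LinearMap.smul_apply, LinearMap.id_apply]

lemma mem_ztor_iff {i : ℕ} {x : M} :
    x ∈ ztor R n M i ↔ zc R n ^ i • x = 0 := by
  simp only [ztor, LinearMap.mem_ker, LinearMap.smul_apply, LinearMap.id_apply]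

lemma smul_pow_succ (i : ℕ) (x : M) :
    zc R n • (zc R n ^ i • x) = zc R n ^ (i + 1) • x := by
  rw [smul_smul, ← pow_succ']

lemma pow_smul_smul (i : ℕ) (x : M) :
    zc R n ^ i • (zc R n • x) = zc R n ^ (i + 1) • x := by
  rw [smul_smul, ← pow_succ]

noncomputable def alpha0 (i : ℕ) : ztor R n M (i+1) →ₗ[Az R n] zpowSub R n M i :=
  LinearMap.codRestrict _ ((zc R n ^ i) • (ztor R n M (i+1)).subtype)
    (fun u => (mem_zpowSub_iff R n M).2 ⟨u, rfl⟩)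

noncomputable def alpha (i : ℕ) :
    ztor R n M (i+1) →ₗ[Az R n]
      (zpowSub R n M i ⧸ Submodule.comap (zpowSub R n M i).subtype (zpowSub R n M (i+1))) :=
  (Submodule.comap (zpowSub R n M i).subtype (zpowSub R n M (i+1))).mkQ ∘ₗ alpha0 R n M i

lemma alpha_apply (i : ℕ) (u : ztor R n M (i+1))
    (h : zc R n ^ i • (u : M) ∈ zpowSub R n M i) :
    alpha R n M i u = Submodule.Quotient.mk ⟨zc R n ^ i • (u : M), h⟩ := rfl

end aux

/-- For `A = R[z]/(z^n)` over a DVR `R`, a finitely generated `A`-module `M`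
and `0 ≤ i < n`: the kernel of the multiplication-by-`z` map
`μ : z^i M/z^{i+1} M → z^{i+1} M/z^{i+2} M` is isomorphic to the cokernel of the
multiplication-by-`z` map `λ : M^{(i+2)}/M^{(i+1)} → M^{(i+1)}/M^{(i)}`. -/
theorem stmt4 (R : Type) [CommRing R] [IsDomain R] [IsDiscreteValuationRing R] (n : ℕ)
    (M : Type) [AddCommGroup M] [Module (Az R n) M] [Module.Finite (Az R n) M]
    (i : ℕ) (hi : i < n)
    (mu : (zpowSub R n M i ⧸
            Submodule.comap (zpowSub R n M i).subtype (zpowSub R n M (i + 1))) →ₗ[Az R n]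
          (zpowSub R n M (i + 1) ⧸
            Submodule.comap (zpowSub R n M (i + 1)).subtype (zpowSub R n M (i + 2))))
    (hmu : ∀ (u : M) (hu : u ∈ zpowSub R n M i) (hv : zc R n • u ∈ zpowSub R n M (i + 1)),
      mu (Submodule.Quotient.mk ⟨u, hu⟩) = Submodule.Quotient.mk ⟨zc R n • u, hv⟩)
    (lam : (ztor R n M (i + 2) ⧸
            Submodule.comap (ztor R n M (i + 2)).subtype (ztor R n M (i + 1))) →ₗ[Az R n]
           (ztor R n M (i + 1) ⧸
            Submodule.comap (ztor R n M (i + 1)).subtype (ztor R n M i)))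
    (hlam : ∀ (u : M) (hu : u ∈ ztor R n M (i + 2)) (hv : zc R n • u ∈ ztor R n M (i + 1)),
      lam (Submodule.Quotient.mk ⟨u, hu⟩) = Submodule.Quotient.mk ⟨zc R n • u, hv⟩) :
    Nonempty (↥(LinearMap.ker mu) ≃ₗ[Az R n]
      ((ztor R n M (i + 1) ⧸
          Submodule.comap (ztor R n M (i + 1)).subtype (ztor R n M i)) ⧸
        LinearMap.range lam)) := by
  classical
  -- α' : M^{(i+1)} →ₗ ker μ,  u ↦ [z^i • u]
  have hker_mem : ∀ u : ztor R n M (i+1), alpha R n M i u ∈ LinearMap.ker mu := by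
    intro u
    have hmem : zc R n ^ i • (u : M) ∈ zpowSub R n M i := (mem_zpowSub_iff R n M).2 ⟨u, rfl⟩
    have hz : zc R n • (zc R n ^ i • (u : M)) = 0 := by
      rw [smul_pow_succ]; exact (mem_ztor_iff R n M).1 u.2
    have hv : zc R n • (zc R n ^ i • (u : M)) ∈ zpowSub R n M (i + 1) := by
      rw [hz]; exact zero_mem _
    rw [LinearMap.mem_ker, alpha_apply R n M i u hmem, hmu _ hmem hv,
        Submodule.Quotient.mk_eq_zero, Submodule.mem_comap]
    show zc R n • (zc R n ^ i • (u : M)) ∈ zpowSub R n M (i + 2)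
    rw [hz]; exact zero_mem _
  set α' : ztor R n M (i+1) →ₗ[Az R n] LinearMap.ker mu :=
    LinearMap.codRestrict _ (alpha R n M i) hker_mem with hα'
  have hαsurj : Function.Surjective α' := by
    rintro ⟨q, hq⟩
    obtain ⟨⟨x, hx⟩, rfl⟩ := Submodule.Quotient.mk_surjective _ q
    obtain ⟨u, rfl⟩ := (mem_zpowSub_iff R n M).1 hx
    have hv1 : zc R n • (zc R n ^ i • u) ∈ zpowSub R n M (i + 1) :=
      (mem_zpowSub_iff R n M).2 ⟨u, (smul_pow_succ R n M i u).symm⟩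
    rw [LinearMap.mem_ker, hmu _ hx hv1, Submodule.Quotient.mk_eq_zero,
        Submodule.mem_comap] at hq
    replace hq : zc R n • (zc R n ^ i • u) ∈ zpowSub R n M (i + 2) := hq
    obtain ⟨w, hw⟩ := (mem_zpowSub_iff R n M).1 hq
    have hw' : zc R n ^ (i + 2) • w = zc R n ^ (i + 1) • u := by
      rw [hw, smul_pow_succ]
    have hv : u - zc R n • w ∈ ztor R n M (i + 1) := by
      rw [mem_ztor_iff, smul_sub, pow_smul_smul,
        show i + 1 + 1 = i + 2 from rfl, hw', sub_self]
    refine ⟨⟨u - zc R n • w, hv⟩, ?_⟩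
    apply Subtype.ext
    show alpha R n M i ⟨u - zc R n • w, hv⟩ = Submodule.Quotient.mk ⟨zc R n ^ i • u, hx⟩
    have hmem : zc R n ^ i • (u - zc R n • w) ∈ zpowSub R n M i :=
      (mem_zpowSub_iff R n M).2 ⟨_, rfl⟩
    rw [alpha_apply R n M i _ hmem, Submodule.Quotient.eq, Submodule.mem_comap]
    show zc R n ^ i • (u - zc R n • w) - zc R n ^ i • u ∈ zpowSub R n M (i + 1)
    refine (mem_zpowSub_iff R n M).2 ⟨-w, ?_⟩
    rw [smul_sub, pow_smul_smul, smul_neg]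
    abel
  -- β : M^{(i+1)} →ₗ coker λ
  set β : ztor R n M (i+1) →ₗ[Az R n]
      ((ztor R n M (i + 1) ⧸ Submodule.comap (ztor R n M (i + 1)).subtype (ztor R n M i)) ⧸
        LinearMap.range lam) :=
    (LinearMap.range lam).mkQ ∘ₗ
      (Submodule.comap (ztor R n M (i + 1)).subtype (ztor R n M i)).mkQ with hβ
  have hβsurj : Function.Surjective β := by
    rw [hβ, LinearMap.coe_comp]
    exact (Submodule.mkQ_surjective _).comp (Submodule.mkQ_surjective _)
  have hk : LinearMap.ker α' = LinearMap.ker β := by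
    ext u
    rw [hα', LinearMap.ker_codRestrict]
    constructor
    · intro hu
      rw [LinearMap.mem_ker] at hu ⊢
      have hmem : zc R n ^ i • (u : M) ∈ zpowSub R n M i := (mem_zpowSub_iff R n M).2 ⟨u, rfl⟩
      rw [alpha_apply R n M i u hmem, Submodule.Quotient.mk_eq_zero, Submodule.mem_comap] at hu
      replace hu : zc R n ^ i • (u : M) ∈ zpowSub R n M (i + 1) := hu
      obtain ⟨w, hw⟩ := (mem_zpowSub_iff R n M).1 hu
      have hw2 : w ∈ ztor R n M (i + 2) := by
        rw [mem_ztor_iff]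
        have : zc R n ^ (i+2) • w = zc R n • (zc R n ^ (i+1) • w) := (smul_pow_succ R n M _ w).symm
        rw [this, hw, smul_pow_succ]
        exact (mem_ztor_iff R n M).1 u.2
      have hv : zc R n • w ∈ ztor R n M (i + 1) := by
        rw [mem_ztor_iff, pow_smul_smul]
        exact (mem_ztor_iff R n M).1 hw2
      rw [hβ, LinearMap.comp_apply]
      show Submodule.mkQ _ (Submodule.Quotient.mk u) = 0
      rw [Submodule.mkQ_apply, Submodule.Quotient.mk_eq_zero]
      refine ⟨Submodule.Quotient.mk ⟨w, hw2⟩, ?_⟩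
      rw [hlam w hw2 hv, Submodule.Quotient.eq, Submodule.mem_comap]
      show zc R n • w - (u : M) ∈ ztor R n M i
      rw [mem_ztor_iff, smul_sub, pow_smul_smul, hw]
      abel
    · intro hu
      rw [LinearMap.mem_ker, hβ, LinearMap.comp_apply] at hu
      replace hu : Submodule.mkQ _ (Submodule.Quotient.mk u) = 0 := hu
      rw [Submodule.mkQ_apply, Submodule.Quotient.mk_eq_zero] at hu
      obtain ⟨q, hq⟩ := hu
      obtain ⟨⟨w, hw2⟩, rfl⟩ := Submodule.Quotient.mk_surjective _ q
      have hv : zc R n • w ∈ ztor R n M (i + 1) := by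
        rw [mem_ztor_iff, pow_smul_smul]
        exact (mem_ztor_iff R n M).1 hw2
      rw [hlam w hw2 hv, Submodule.Quotient.eq, Submodule.mem_comap] at hq
      replace hq : zc R n • w - (u : M) ∈ ztor R n M i := hq
      rw [mem_ztor_iff, smul_sub, pow_smul_smul] at hq
      have heq : zc R n ^ i • (u : M) = zc R n ^ (i+1) • w := (sub_eq_zero.mp hq).symm
      rw [LinearMap.mem_ker]
      have hmem : zc R n ^ i • (u : M) ∈ zpowSub R n M i := (mem_zpowSub_iff R n M).2 ⟨u, rfl⟩
      rw [alpha_apply R n M i u hmem, Submodule.Quotient.mk_eq_zero, Submodule.mem_comap]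
      show zc R n ^ i • (u : M) ∈ zpowSub R n M (i + 1)
      rw [heq]
      exact (mem_zpowSub_iff R n M).2 ⟨w, rfl⟩
  exact ⟨((LinearMap.quotKerEquivOfSurjective α' hαsurj).symm.trans
      (Submodule.quotEquivOfEq _ _ hk)).trans (LinearMap.quotKerEquivOfSurjective β hβsurj)⟩
end

section
/- Let R be a discrete valuation ring with fraction field K, A = R[z]/(z^n), and define the generalized rank of a finitely generated A-module M as R(M) = Σ_{i=0}^{n-1} dim_K ((z^i M/z^{i+1} M) ⊗_R K). Then for any short exact sequence 0 → M' → M → M'' → 0 of finitely generated A-modules, R(M) = R(M') + R(M''). -/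
open Polynomial

open scoped TensorProduct

/-- The graded piece `G_i(M) = z^i M / z^{i+1} M`. -/
noncomputable abbrev gQ (R : Type) [CommRing R] (n : ℕ) (M : Type) [AddCommGroup M]
    [Module (Az R n) M] (i : ℕ) :=
  zpowSub R n M i ⧸ Submodule.comap (zpowSub R n M i).subtype (zpowSub R n M (i + 1))

/-- The generalized rank `R(M) = Σ_{i<n} dim_K ((z^i M/z^{i+1} M) ⊗_R K)`, where
`K = Frac(R)`. -/
noncomputable def grk (R : Type) [CommRing R] [IsDomain R] (n : ℕ) (M : Type) [AddCommGroup M]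
    [Module (Az R n) M] : Cardinal :=
  ∑ i ∈ Finset.range n,
    Module.rank (FractionRing R)
      (FractionRing R ⊗[R] (RestrictScalars R (Az R n) (gQ R n M i)))

/-! ### Auxiliary definitions and lemmas -/

section Aux

variable {R : Type} [CommRing R]

/-- Rank after base change to the fraction field. -/
noncomputable def rk (R : Type) [CommRing R] [IsDomain R] (N : Type) [AddCommGroup N]
    [Module R N] : Cardinal :=
  Module.rank (FractionRing R) (FractionRing R ⊗[R] N)

instance rsModuleG {A N : Type} [CommRing A] [Algebra R A] [AddCommGroup N] [Module A N] :
    @Module R (RestrictScalars R A N) _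
      (@AddCommGroup.toAddCommMonoid _ (instAddCommGroupRestrictScalars R A N)) :=
  RestrictScalars.module R A N

/-- Restriction of scalars of a linear map, as a map between `RestrictScalars` synonyms. -/
def rmap {A : Type} [CommRing A] [Algebra R A] {N N' : Type} [AddCommGroup N] [AddCommGroup N']
    [Module A N] [Module A N'] (f : N →ₗ[A] N') :
    RestrictScalars R A N →ₗ[R] RestrictScalars R A N' where
  toFun := f
  map_add' := f.map_add
  map_smul' := fun r x => f.map_smul (algebraMap R A r) x

/-- Restriction of scalars of a linear equivalence. -/
def requiv {A : Type} [CommRing A] [Algebra R A] {N N' : Type} [AddCommGroup N] [AddCommGroup N']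
    [Module A N] [Module A N'] (e : N ≃ₗ[A] N') :
    RestrictScalars R A N ≃ₗ[R] RestrictScalars R A N' :=
  { rmap e.toLinearMap with
    invFun := e.symm
    left_inv := e.left_inv
    right_inv := e.right_inv }

variable [IsDomain R]

lemma rk_eq_of_equiv {N N' : Type} [AddCommGroup N] [Module R N] [AddCommGroup N'] [Module R N']
    (e : N ≃ₗ[R] N') : rk R N = rk R N' :=
  (LinearEquiv.baseChange R (FractionRing R) N N' e).rank_eq

lemma rk_eq_zero {N : Type} [AddCommGroup N] [Module R N] [Subsingleton N] : rk R N = 0 :=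
  rank_subsingleton' _ _

lemma rk_additive {N' N N'' : Type} [AddCommGroup N'] [Module R N'] [AddCommGroup N] [Module R N]
    [AddCommGroup N''] [Module R N'']
    (f : N' →ₗ[R] N) (g : N →ₗ[R] N'') (hf : Function.Injective f) (hg : Function.Surjective g)
    (hfg : Function.Exact f g) : rk R N = rk R N' + rk R N'' := by
  set K := FractionRing R
  have hflat : Module.Flat R K := Localization.flat R _
  let fK : K ⊗[R] N' →ₗ[K] K ⊗[R] N := f.baseChange K
  let gK : K ⊗[R] N →ₗ[K] K ⊗[R] N'' := g.baseChange K
  have hfcoe : (fK : K ⊗[R] N' → K ⊗[R] N) = f.lTensor K := rfl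
  have hgcoe : (gK : K ⊗[R] N → K ⊗[R] N'') = g.lTensor K := rfl
  have hfK : Function.Injective fK := by
    rw [hfcoe]; exact Module.Flat.lTensor_preserves_injective_linearMap f hf
  have hgK : Function.Surjective gK := by
    rw [hgcoe]; exact LinearMap.lTensor_surjective K hg
  have hE : Function.Exact fK gK := by
    rw [hfcoe, hgcoe]; exact Module.Flat.lTensor_exact K hfg
  have h1 := LinearMap.rank_range_add_rank_ker gK
  have h2 : LinearMap.ker gK = LinearMap.range fK := LinearMap.exact_iff.mp hE
  have e1 : (K ⊗[R] N') ≃ₗ[K] LinearMap.ker gK :=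
    (LinearEquiv.ofInjective fK hfK).trans (LinearEquiv.ofEq _ _ h2.symm)
  have h3 := LinearEquiv.rank_eq (R := K) (M := ↥(LinearMap.ker gK)) (M₁ := K ⊗[R] N') e1.symm
  have h4 := rank_range_of_surjective gK hgK
  show Module.rank K (K ⊗[R] N) = Module.rank K (K ⊗[R] N') + Module.rank K (K ⊗[R] N'')
  rw [← h1, h3, h4, add_comm]

end Aux

section AzAux

variable (R : Type) [CommRing R] (n : ℕ) (M : Type) [AddCommGroup M] [Module (Az R n) M]

lemma zpowSub_mem_iff (i : ℕ) (x : M) :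
    x ∈ zpowSub R n M i ↔ ∃ y, (zc R n ^ i) • y = x := by
  simp [zpowSub]

lemma zpowSub_succ_le (i : ℕ) : zpowSub R n M (i + 1) ≤ zpowSub R n M i := by
  intro x hx
  rw [zpowSub_mem_iff] at hx ⊢
  obtain ⟨y, hy⟩ := hx
  exact ⟨zc R n • y, by rw [smul_smul, ← pow_succ, hy]⟩

lemma zpowSub_zero : zpowSub R n M 0 = ⊤ := by
  ext x; simp [zpowSub_mem_iff]

lemma zc_pow_n : zc R n ^ n = 0 := by
  rw [zc, ← map_pow, Ideal.Quotient.eq_zero_iff_mem]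
  exact Ideal.subset_span rfl

lemma zpowSub_n : zpowSub R n M n = ⊥ := by
  ext x
  simp only [zpowSub_mem_iff, zc_pow_n, Submodule.mem_bot]
  constructor
  · rintro ⟨y, rfl⟩; exact zero_smul (Az R n) y
  · rintro rfl; exact ⟨0, smul_zero _⟩

variable [IsDomain R]

lemma rk_step (i : ℕ) :
    rk R (RestrictScalars R (Az R n) (zpowSub R n M i)) =
      rk R (RestrictScalars R (Az R n) (zpowSub R n M (i + 1))) +
        rk R (RestrictScalars R (Az R n) (gQ R n M i)) := by
  set A := Az R n
  set S := Submodule.comap (zpowSub R n M i).subtype (zpowSub R n M (i + 1)) with hS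
  have h := rk_additive (R := R) (rmap S.subtype) (rmap S.mkQ)
    (Submodule.injective_subtype S) (Submodule.mkQ_surjective S)
    (LinearMap.exact_subtype_mkQ S)
  rw [h]
  congr 1
  exact rk_eq_of_equiv
    (requiv (R := R) (Submodule.comapSubtypeEquivOfLe (zpowSub_succ_le R n M i)))

lemma rk_telescope (m : ℕ) :
    rk R (RestrictScalars R (Az R n) (zpowSub R n M 0)) =
      (∑ i ∈ Finset.range m, rk R (RestrictScalars R (Az R n) (gQ R n M i))) +
        rk R (RestrictScalars R (Az R n) (zpowSub R n M m)) := by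
  induction m with
  | zero => simp
  | succ m ih =>
      rw [ih, Finset.sum_range_succ, rk_step]
      ring

lemma grk_eq_rk : grk R n M = rk R (RestrictScalars R (Az R n) M) := by
  have h0 : rk R (RestrictScalars R (Az R n) (zpowSub R n M 0)) =
      rk R (RestrictScalars R (Az R n) M) := by
    refine rk_eq_of_equiv (requiv ?_)
    exact (LinearEquiv.ofEq _ _ (zpowSub_zero R n M)).trans (Submodule.topEquiv)
  have hn : rk R (RestrictScalars R (Az R n) (zpowSub R n M n)) = 0 := by
    haveI : Subsingleton (zpowSub R n M n) := by
      rw [zpowSub_n]; infer_instance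
    haveI : Subsingleton (RestrictScalars R (Az R n) (zpowSub R n M n)) :=
      inferInstanceAs (Subsingleton (zpowSub R n M n))
    exact rk_eq_zero
  have := rk_telescope R n M n
  rw [h0, hn, add_zero] at this
  rw [this]
  rfl

end AzAux

/-- The generalized rank is additive on short exact sequences of finitely
generated modules over `A = R[z]/(z^n)`, `R` a DVR. -/
theorem stmt5 (R : Type) [CommRing R] [IsDomain R] [IsDiscreteValuationRing R] (n : ℕ)
    (M' M M'' : Type) [AddCommGroup M'] [Module (Az R n) M'] [Module.Finite (Az R n) M']
    [AddCommGroup M] [Module (Az R n) M] [Module.Finite (Az R n) M]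
    [AddCommGroup M''] [Module (Az R n) M''] [Module.Finite (Az R n) M'']
    (f : M' →ₗ[Az R n] M) (g : M →ₗ[Az R n] M'')
    (hf : Function.Injective f) (hg : Function.Surjective g)
    (hfg : LinearMap.range f = LinearMap.ker g) :
    grk R n M = grk R n M' + grk R n M'' := by
  rw [grk_eq_rk, grk_eq_rk, grk_eq_rk]
  have hE : Function.Exact f g := LinearMap.exact_iff.mpr hfg.symm
  exact rk_additive (rmap f) (rmap g) hf hg hE
end
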